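/- Let R be a commutative Noetherian ring of prime characteristic p and f₁,…,fₛ ∈ R generate an ideal I. If there exist positive integers α, β with (f₁⋯fₛ)^α ∈ ⟨f₁^{α+β},…,fₛ^{α+β}⟩, then every element of the direct limit lim_{t} R/⟨f₁^t,…,fₛ^t⟩ (with transition maps given by multiplication by f₁⋯fₛ) is zero; that is, the top local cohomology module H^s_I(R), computed as this direct limit, vanishes. -/

import Mathlib

lemma frob_pow_mem_span {R : Type*} [CommRing R] (p : ℕ) [Fact p.Prime] [CharP R p]
    {s : ℕ} {g : Fin s → R} {x : R} (hx : x ∈ Ideal.span (Set.range g)) (e : ℕ) :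
    x ^ (p ^ e) ∈ Ideal.span (Set.range fun i => g i ^ (p ^ e)) := by
  induction e with
  | zero => simpa using hx
  | succ e ih =>
    have h1 : frobenius R p (x ^ (p ^ e)) ∈ Ideal.map (frobenius R p)
        (Ideal.span (Set.range fun i => g i ^ (p ^ e))) :=
      Ideal.mem_map_of_mem _ ih
    rw [Ideal.map_span] at h1
    have heq : (frobenius R p) '' (Set.range fun i => g i ^ (p ^ e))
        = Set.range fun i => g i ^ (p ^ (e + 1)) := by
      rw [← Set.range_comp]
      ext y
      constructor
      · rintro ⟨i, rfl⟩
        exact ⟨i, by simp [frobenius_def, ← pow_mul, pow_succ]⟩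
      · rintro ⟨i, rfl⟩
        exact ⟨i, by simp [frobenius_def, ← pow_mul, pow_succ]⟩
    rw [heq] at h1
    rw [pow_succ, pow_mul]
    rw [← pow_succ]
    simpa [frobenius_def] using h1

lemma span_pow_le {R : Type*} [CommRing R] {s : ℕ} {g : Fin s → R} {a b : ℕ} (hab : a ≤ b) :
    Ideal.span (Set.range fun i => g i ^ b) ≤ Ideal.span (Set.range fun i => g i ^ a) := by
  rw [Ideal.span_le]
  rintro y ⟨i, rfl⟩
  show g i ^ b ∈ _
  have : g i ^ b = g i ^ (b - a) * g i ^ a := by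
    rw [← pow_add, Nat.sub_add_cancel hab]
  rw [this]
  exact Ideal.mul_mem_left _ _ (Ideal.subset_span ⟨i, rfl⟩)

/-- If `(f₁⋯fₛ)^α ∈ ⟨f₁^{α+β},…,fₛ^{α+β}⟩` for some positive `α, β` in a Noetherian
ring of prime characteristic `p`, then every element of the direct limit
`lim_t R/⟨f₁^t,…,fₛ^t⟩` (transition maps: multiplication by `f₁⋯fₛ`) is zero;
concretely, the class of any `r ∈ R` in stage `t` dies at a later stage:
`∃ k, (f₁⋯fₛ)^k · r ∈ ⟨f₁^{t+k},…,fₛ^{t+k}⟩`. Hence `H^s_I(R) = 0`. -/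
theorem stmt_6 (R : Type*) [CommRing R] [IsNoetherianRing R]
    (p : ℕ) [Fact p.Prime] [CharP R p]
    (s : ℕ) (f : Fin s → R) (α β : ℕ) (hα : 0 < α) (hβ : 0 < β)
    (h : (∏ i, f i) ^ α ∈ Ideal.span (Set.range fun i => f i ^ (α + β))) :
    ∀ t : ℕ, ∀ r : R, ∃ k : ℕ,
      (∏ i, f i) ^ k * r ∈ Ideal.span (Set.range fun i => f i ^ (t + k)) := by
  intro t r
  have hp : 1 < p := (Fact.out : p.Prime).one_lt
  have ht : t ≤ p ^ t := le_of_lt (Nat.lt_pow_self hp (n := t))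
  refine ⟨α * p ^ t, ?_⟩
  have h1 : ((∏ i, f i) ^ α) ^ (p ^ t)
      ∈ Ideal.span (Set.range fun i => (f i ^ (α + β)) ^ (p ^ t)) :=
    frob_pow_mem_span p h t
  have h2 : (∏ i, f i) ^ (α * p ^ t)
      ∈ Ideal.span (Set.range fun i => f i ^ ((α + β) * p ^ t)) := by
    rw [pow_mul]
    convert h1 using 3
    ext i
    rw [← pow_mul]
  have hle : t + α * p ^ t ≤ (α + β) * p ^ t := by
    rw [add_mul]
    have : t ≤ β * p ^ t := le_trans ht (Nat.le_mul_of_pos_left _ hβ)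
    omega
  exact Ideal.mul_mem_right r _ (span_pow_le hle h2)
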